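/- Let ⟨x,y⟩₁ = −x₀y₀ + x₁y₁ + x₂y₂ + x₃y₃ + x₄y₄ denote the Lorentzian bilinear form on ℝ⁵. Let a, b be nonzero real numbers and define Θ(t,u) = (a u² + a/b² + a + 1/(4a), u, cos(t)/b, sin(t)/b, a u² + a/b² + a − 1/(4a)). Then for all (t,u): ⟨Θ, Θ⟩₁ = −1 (so Θ takes values in H⁴ = {x ∈ ℝ⁵ : ⟨x,x⟩₁ = −1}), and ⟨∂ᵤΘ, ∂ᵤΘ⟩₁ = 1, ⟨∂ₜΘ, ∂ₜΘ⟩₁ = 1/b², ⟨∂ₜΘ, ∂ᵤΘ⟩₁ = 0. -/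

import Mathlib

/-- The Lorentzian bilinear form on `ℝ⁵` with timelike coordinate `x₀`. -/
def lor5 (x y : Fin 5 → ℝ) : ℝ :=
  -(x 0 * y 0) + x 1 * y 1 + x 2 * y 2 + x 3 * y 3 + x 4 * y 4

/-- Case (3) of Proposition 4.3: the lightlike-parabola/circle surface lies in
`H⁴ ⊂ ℝ⁵₁` and has orthogonal coordinate vector fields. -/
theorem stmt_9 (a b : ℝ) (ha : a ≠ 0) (hb : b ≠ 0)
    (Θ : ℝ → ℝ → Fin 5 → ℝ)
    (hΘ : ∀ t u : ℝ, Θ t u =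
      ![a * u ^ 2 + a / b ^ 2 + a + 1 / (4 * a), u,
        Real.cos t / b, Real.sin t / b,
        a * u ^ 2 + a / b ^ 2 + a - 1 / (4 * a)]) :
    ∀ t u : ℝ,
      lor5 (Θ t u) (Θ t u) = -1 ∧
      lor5 (deriv (fun u' => Θ t u') u) (deriv (fun u' => Θ t u') u) = 1 ∧
      lor5 (deriv (fun t' => Θ t' u) t) (deriv (fun t' => Θ t' u) t) = 1 / b ^ 2 ∧
      lor5 (deriv (fun t' => Θ t' u) t) (deriv (fun u' => Θ t u') u) = 0 := by
  intro t u
  have hpar : HasDerivAt (fun u' : ℝ => a * u' ^ 2) (2 * a * u) u :=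
    ((hasDerivAt_pow 2 u).const_mul a).congr_deriv (by ring)
  have hdu : deriv (fun u' => Θ t u') u = ![2 * a * u, 1, 0, 0, 2 * a * u] := by
    have h : HasDerivAt (fun u' => Θ t u') ![2 * a * u, 1, 0, 0, 2 * a * u] u := by
      rw [show (fun u' => Θ t u') = fun u' =>
          ![a * u' ^ 2 + a / b ^ 2 + a + 1 / (4 * a), u',
            Real.cos t / b, Real.sin t / b,
            a * u' ^ 2 + a / b ^ 2 + a - 1 / (4 * a)] from funext fun u' => hΘ t u']
      rw [hasDerivAt_pi]
      intro i
      fin_cases i <;>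
        simp only [Matrix.cons_val_zero, Matrix.cons_val_one, Matrix.head_cons,
          Matrix.cons_val_two, Matrix.tail_cons, Matrix.cons_val_three, Matrix.cons_val_four,
          Fin.mk_zero, Fin.mk_one, Fin.isValue]
      · exact ((((hpar.add_const (a / b ^ 2)).add_const a).add_const (1 / (4 * a)))).congr_deriv
          (by simp)
      · exact hasDerivAt_id u
      · exact hasDerivAt_const u _
      · exact hasDerivAt_const u _
      · exact ((((hpar.add_const (a / b ^ 2)).add_const a).sub_const (1 / (4 * a)))).congr_deriv
          (by simp)
    exact h.deriv
  have hdt : deriv (fun t' => Θ t' u) t = ![0, 0, -Real.sin t / b, Real.cos t / b, 0] := by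
    have h : HasDerivAt (fun t' => Θ t' u) ![0, 0, -Real.sin t / b, Real.cos t / b, 0] t := by
      rw [show (fun t' => Θ t' u) = fun t' =>
          ![a * u ^ 2 + a / b ^ 2 + a + 1 / (4 * a), u,
            Real.cos t' / b, Real.sin t' / b,
            a * u ^ 2 + a / b ^ 2 + a - 1 / (4 * a)] from funext fun t' => hΘ t' u]
      rw [hasDerivAt_pi]
      intro i
      fin_cases i <;>
        simp only [Matrix.cons_val_zero, Matrix.cons_val_one, Matrix.head_cons,
          Matrix.cons_val_two, Matrix.tail_cons, Matrix.cons_val_three, Matrix.cons_val_four,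
          Fin.mk_zero, Fin.mk_one, Fin.isValue]
      · exact hasDerivAt_const t _
      · exact hasDerivAt_const t _
      · exact (Real.hasDerivAt_cos t).div_const b
      · exact (Real.hasDerivAt_sin t).div_const b
      · exact hasDerivAt_const t _
    exact h.deriv
  have hc := Real.sin_sq_add_cos_sq t
  refine ⟨?_, ?_, ?_, ?_⟩
  · rw [hΘ]; simp [lor5]; field_simp
    linear_combination (16 * a^2 * b^2) * hc
  · rw [hdu]; simp [lor5]
  · rw [hdt]; simp [lor5]; linear_combination (1/b^2) * hc
  · rw [hdt, hdu]; simp [lor5]
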